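/- For nonnegative Hermitian n×n matrices A and B, det(A+B)^{1/n} ≥ det(A)^{1/n} + det(B)^{1/n} (Minkowski's determinant inequality for Hermitian positive semidefinite matrices). -/

import Mathlib

open Matrix
open scoped ComplexOrder

noncomputable section

/-- Superadditivity of the geometric mean. -/
lemma geom_mean_superadd (n : ℕ) (hn : 0 < n) (a b : Fin n → ℝ)
    (ha : ∀ i, 0 ≤ a i) (hb : ∀ i, 0 ≤ b i) :
    (∏ i, a i) ^ ((n : ℝ)⁻¹) + (∏ i, b i) ^ ((n : ℝ)⁻¹)
      ≤ (∏ i, (a i + b i)) ^ ((n : ℝ)⁻¹) := by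
  have hn' : (0 : ℝ) < (n : ℝ) := by exact_mod_cast hn
  have hninv : (0 : ℝ) < (n : ℝ)⁻¹ := by positivity
  by_cases hc : ∀ i, 0 < a i + b i
  · set c : Fin n → ℝ := fun i => a i + b i with hcdef
    have hc0 : ∀ i, 0 ≤ c i := fun i => (hc i).le
    have key : ∀ f : Fin n → ℝ, (∀ i, 0 ≤ f i) →
        (∏ i, f i / c i) ^ ((n : ℝ)⁻¹) ≤ (n : ℝ)⁻¹ * ∑ i, f i / c i := by
      intro f hf
      have h1 := Real.geom_mean_le_arith_mean_weighted Finset.univ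
        (fun _ => (n : ℝ)⁻¹) (fun i => f i / c i)
        (fun i _ => hninv.le)
        (by simp [Finset.sum_const, Finset.card_univ]; field_simp)
        (fun i _ => div_nonneg (hf i) (hc0 i))
      rw [← Real.finset_prod_rpow _ _ (fun i _ => div_nonneg (hf i) (hc0 i)) _]
      simpa [Finset.mul_sum] using h1
    have ha' := key a ha
    have hb' := key b hb
    have hsum : (n : ℝ)⁻¹ * ∑ i, a i / c i + (n : ℝ)⁻¹ * ∑ i, b i / c i = 1 := by
      rw [← mul_add, ← Finset.sum_add_distrib]
      have h2 : ∀ i ∈ Finset.univ, a i / c i + b i / c i = 1 := fun i _ => by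
        rw [← add_div]; exact div_self (hc i).ne'
      rw [Finset.sum_congr rfl h2]
      simp [Finset.card_univ]
      field_simp
    have hmain : (∏ i, a i / c i) ^ ((n : ℝ)⁻¹) + (∏ i, b i / c i) ^ ((n : ℝ)⁻¹) ≤ 1 := by
      calc (∏ i, a i / c i) ^ ((n : ℝ)⁻¹) + (∏ i, b i / c i) ^ ((n : ℝ)⁻¹)
          ≤ (n : ℝ)⁻¹ * ∑ i, a i / c i + (n : ℝ)⁻¹ * ∑ i, b i / c i := add_le_add ha' hb'
        _ = 1 := hsum
    have hprodc : 0 ≤ ∏ i, c i := Finset.prod_nonneg fun i _ => hc0 i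
    have hfac : ∀ f : Fin n → ℝ, (∀ i, 0 ≤ f i) →
        (∏ i, f i) ^ ((n : ℝ)⁻¹)
          = (∏ i, c i) ^ ((n : ℝ)⁻¹) * (∏ i, f i / c i) ^ ((n : ℝ)⁻¹) := by
      intro f hf
      rw [← Real.mul_rpow hprodc (Finset.prod_nonneg fun i _ => div_nonneg (hf i) (hc0 i)),
        ← Finset.prod_mul_distrib]
      congr 1
      refine Finset.prod_congr rfl fun i _ => ?_
      rw [mul_comm]
      exact (div_mul_cancel₀ _ (hc i).ne').symm
    rw [hfac a ha, hfac b hb, ← mul_add]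
    calc (∏ i, c i) ^ ((n : ℝ)⁻¹) * ((∏ i, a i / c i) ^ ((n : ℝ)⁻¹) + (∏ i, b i / c i) ^ ((n : ℝ)⁻¹))
        ≤ (∏ i, c i) ^ ((n : ℝ)⁻¹) * 1 :=
          mul_le_mul_of_nonneg_left hmain (Real.rpow_nonneg hprodc _)
      _ = (∏ i, (a i + b i)) ^ ((n : ℝ)⁻¹) := by rw [mul_one]
  · push_neg at hc
    obtain ⟨i, hi⟩ := hc
    have hai : a i = 0 := le_antisymm (by linarith [hb i]) (ha i)
    have hbi : b i = 0 := le_antisymm (by linarith [ha i]) (hb i)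
    have h1 : (∏ j, a j) = 0 := Finset.prod_eq_zero (Finset.mem_univ i) hai
    have h2 : (∏ j, b j) = 0 := Finset.prod_eq_zero (Finset.mem_univ i) hbi
    have h3 : (∏ j, (a j + b j)) = 0 :=
      Finset.prod_eq_zero (Finset.mem_univ i) (by rw [hai, hbi, add_zero])
    rw [h1, h2, h3, Real.zero_rpow hninv.ne']
    simp

/-- The real part of the determinant of a Hermitian matrix is the product of its
eigenvalues. -/
lemma det_re_eq_prod {n : ℕ} {M : Matrix (Fin n) (Fin n) ℂ} (hM : M.IsHermitian) :
    M.det.re = ∏ i, hM.eigenvalues i := by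
  have h := hM.det_eq_prod_eigenvalues
  have : M.det = ((∏ i, hM.eigenvalues i : ℝ) : ℂ) := by
    rw [h]; push_cast; rfl
  rw [this, Complex.ofReal_re]

lemma det_re_nonneg {n : ℕ} {M : Matrix (Fin n) (Fin n) ℂ} (hM : M.PosSemidef) :
    0 ≤ M.det.re := by
  rw [det_re_eq_prod hM.1]
  exact Finset.prod_nonneg fun i _ => hM.eigenvalues_nonneg i

/-- `det (1 + M)` for a Hermitian `M`. -/
lemma det_one_add_re {n : ℕ} {M : Matrix (Fin n) (Fin n) ℂ} (hM : M.IsHermitian) :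
    (1 + M).det = ((∏ i, (1 + hM.eigenvalues i) : ℝ) : ℂ) := by
  have hU := (Matrix.mem_unitaryGroup_iff).mp (hM.eigenvectorUnitary).2
  have h1 : (1 : Matrix (Fin n) (Fin n) ℂ) + M
      = (hM.eigenvectorUnitary : Matrix (Fin n) (Fin n) ℂ)
        * (1 + Matrix.diagonal (RCLike.ofReal ∘ hM.eigenvalues))
        * star (hM.eigenvectorUnitary : Matrix (Fin n) (Fin n) ℂ) := by
    rw [Matrix.mul_add, Matrix.add_mul, Matrix.mul_one, hU]
    conv_lhs => rw [hM.spectral_theorem, Unitary.conjStarAlgAut_apply]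
  rw [h1, Matrix.det_mul_right_comm, hU, one_mul]
  rw [← Matrix.diagonal_one, Matrix.diagonal_add, Matrix.det_diagonal]
  push_cast
  rfl

/-- A positive semidefinite matrix with nonzero determinant is positive definite. -/
lemma posDef_of_det_ne_zero {n : ℕ} {M : Matrix (Fin n) (Fin n) ℂ} (hM : M.PosSemidef)
    (hdet : M.det ≠ 0) : M.PosDef := by
  refine posDef_iff_dotProduct_mulVec.mpr ⟨hM.1, fun x hx => ?_⟩
  refine lt_of_le_of_ne (hM.dotProduct_mulVec_nonneg x) fun h0 => hx ?_
  have hAx : M *ᵥ x = 0 := (hM.dotProduct_mulVec_zero_iff x).mp h0.symm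
  have hinj : Function.Injective M.mulVec :=
    (Matrix.mulVec_injective_iff_isUnit).mpr ((Matrix.isUnit_iff_isUnit_det M).mpr hdet.isUnit)
  have := hinj (a₁ := x) (a₂ := 0) (by simpa using hAx)
  simpa using this

open scoped MatrixOrder in
/-- Key factorization: if `A` is positive definite and `B` positive semidefinite,
the determinants of `B` and `A + B` factor through eigenvalues of `A^{-1/2} B A^{-1/2}`. -/
lemma det_factor {n : ℕ} {A B : Matrix (Fin n) (Fin n) ℂ} (hA : A.PosDef)
    (hB : B.PosSemidef) :
    ∃ μ : Fin n → ℝ, (∀ i, 0 ≤ μ i) ∧ B.det.re = A.det.re * ∏ i, μ i ∧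
      (A + B).det.re = A.det.re * ∏ i, (1 + μ i) := by
  set S := CFC.sqrt A with hSdef
  have hS : S.PosSemidef := (CFC.sqrt_nonneg A).posSemidef
  have hSmul : S * S = A := CFC.sqrt_mul_sqrt_self A hA.posSemidef.nonneg
  have hdetS : S.det * S.det = A.det := by rw [← Matrix.det_mul, hSmul]
  have hdetA : A.det ≠ 0 := hA.det_pos.ne'
  have hdetSne : S.det ≠ 0 := fun h => hdetA (by rw [← hdetS, h, zero_mul])
  have hu : IsUnit S.det := hdetSne.isUnit
  have h1 : S * S⁻¹ = 1 := Matrix.mul_nonsing_inv S hu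
  have h2 : S⁻¹ * S = 1 := Matrix.nonsing_inv_mul S hu
  have hSinvH : S⁻¹.IsHermitian := hS.1.inv
  set C := S⁻¹ * B * S⁻¹ with hCdef
  have hC : C.PosSemidef := by
    have := hB.conjTranspose_mul_mul_same S⁻¹
    rwa [hSinvH.eq] at this
  set μ := hC.1.eigenvalues with hμdef
  refine ⟨μ, fun i => hC.eigenvalues_nonneg i, ?_, ?_⟩
  · -- B = S * C * S
    have hBfac : B = S * C * S := by
      rw [hCdef]
      rw [show S * (S⁻¹ * B * S⁻¹) * S = S * S⁻¹ * B * (S⁻¹ * S) by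
        simp only [Matrix.mul_assoc]]
      rw [h1, h2, one_mul, Matrix.mul_one]
    have : B.det = A.det * C.det := by
      rw [hBfac, Matrix.det_mul, Matrix.det_mul, ← hdetS]; ring
    have him : A.det.im = 0 := by
      have := hA.det_pos
      rw [Complex.lt_def] at this
      simpa using this.2.symm
    have hdetAre : A.det = ((A.det.re : ℝ) : ℂ) := Complex.ext (by simp) (by simp [him])
    have hdetCre : C.det = ((∏ i, μ i : ℝ) : ℂ) := by
      rw [hC.1.det_eq_prod_eigenvalues]; push_cast; rfl
    rw [this, hdetAre, hdetCre, ← Complex.ofReal_mul, Complex.ofReal_re]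
    simp
  · have hABfac : A + B = S * (1 + C) * S := by
      rw [Matrix.mul_add, Matrix.add_mul, Matrix.mul_one, hSmul, hCdef]
      congr 1
      rw [show S * (S⁻¹ * B * S⁻¹) * S = S * S⁻¹ * B * (S⁻¹ * S) by
        simp only [Matrix.mul_assoc]]
      rw [h1, h2, one_mul, Matrix.mul_one]
    have : (A + B).det = A.det * (1 + C).det := by
      rw [hABfac, Matrix.det_mul, Matrix.det_mul, ← hdetS]; ring
    have him : A.det.im = 0 := by
      have := hA.det_pos
      rw [Complex.lt_def] at this
      simpa using this.2.symm
    have hdetAre : A.det = ((A.det.re : ℝ) : ℂ) := Complex.ext (by simp) (by simp [him])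
    rw [this, hdetAre, det_one_add_re hC.1, ← Complex.ofReal_mul, Complex.ofReal_re]
    simp
    exact Or.inl rfl

/-- Minkowski's inequality when `A` is positive definite. -/
lemma minkowski_posDef {n : ℕ} (hn : 0 < n) {A B : Matrix (Fin n) (Fin n) ℂ}
    (hA : A.PosDef) (hB : B.PosSemidef) :
    A.det.re ^ ((n : ℝ)⁻¹) + B.det.re ^ ((n : ℝ)⁻¹)
      ≤ (A + B).det.re ^ ((n : ℝ)⁻¹) := by
  obtain ⟨μ, hμ, hBdet, hABdet⟩ := det_factor hA hB
  have hdetA : 0 < A.det.re := by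
    have := hA.det_pos
    rw [Complex.lt_def] at this
    exact this.1
  have hgeom := geom_mean_superadd n hn (fun _ => 1) μ (fun _ => zero_le_one) hμ
  simp only [Finset.prod_const_one, Real.one_rpow] at hgeom
  rw [hBdet, hABdet,
    Real.mul_rpow hdetA.le (Finset.prod_nonneg fun i _ => hμ i),
    Real.mul_rpow hdetA.le (Finset.prod_nonneg fun i _ => by linarith [hμ i])]
  calc A.det.re ^ ((n : ℝ)⁻¹) + A.det.re ^ ((n : ℝ)⁻¹) * (∏ i, μ i) ^ ((n : ℝ)⁻¹)
      = A.det.re ^ ((n : ℝ)⁻¹) * (1 + (∏ i, μ i) ^ ((n : ℝ)⁻¹)) := by ring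
    _ ≤ A.det.re ^ ((n : ℝ)⁻¹) * (∏ i, (1 + μ i)) ^ ((n : ℝ)⁻¹) :=
        mul_le_mul_of_nonneg_left hgeom (Real.rpow_nonneg hdetA.le _)

/-- Monotonicity: adding a positive semidefinite matrix does not decrease the
determinant of a positive definite matrix. -/
lemma det_re_le_det_re_add {n : ℕ} {A B : Matrix (Fin n) (Fin n) ℂ}
    (hA : A.PosSemidef) (hB : B.PosDef) : B.det.re ≤ (A + B).det.re := by
  obtain ⟨μ, hμ, hAdet, hABdet⟩ := det_factor hB hA
  have hdetB : 0 < B.det.re := by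
    have := hB.det_pos
    rw [Complex.lt_def] at this
    exact this.1
  rw [add_comm, hABdet]
  calc B.det.re = B.det.re * ∏ (i : Fin n), (1:ℝ) := by simp
    _ ≤ B.det.re * ∏ i, (1 + μ i) := by
        refine mul_le_mul_of_nonneg_left ?_ hdetB.le
        exact Finset.prod_le_prod (fun i _ => zero_le_one) (fun i _ => by linarith [hμ i])

/-- Minkowski's determinant inequality for Hermitian positive semidefinite
matrices: `det(A+B)^{1/n} ≥ det(A)^{1/n} + det(B)^{1/n}`. -/
theorem minkowski_det_inequality (n : ℕ) (hn : 0 < n)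
    (A B : Matrix (Fin n) (Fin n) ℂ) (hA : A.PosSemidef) (hB : B.PosSemidef) :
    A.det.re ^ ((n : ℝ)⁻¹) + B.det.re ^ ((n : ℝ)⁻¹)
      ≤ (A + B).det.re ^ ((n : ℝ)⁻¹) := by
  have hninv : (0 : ℝ) < (n : ℝ)⁻¹ := by positivity
  by_cases hAdet : A.det = 0
  · have hAre : A.det.re = 0 := by rw [hAdet]; rfl
    rw [hAre, Real.zero_rpow hninv.ne', zero_add]
    refine Real.rpow_le_rpow (det_re_nonneg hB) ?_ hninv.le
    by_cases hBdet : B.det = 0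
    · have : B.det.re = 0 := by rw [hBdet]; rfl
      rw [this]
      exact det_re_nonneg (hA.add hB)
    · exact det_re_le_det_re_add hA (posDef_of_det_ne_zero hB hBdet)
  · exact minkowski_posDef hn (posDef_of_det_ne_zero hA hAdet) hB

end
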